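/- For every real δ' > 0 there exists a constant C > 0 such that for all integers k ≥ 1 and all real η > 0: ∫_{η/2}^∞ |𝓛_k^{δ'}(r)|² r^{−δ'+1/2} dr ≤ C·η^{−δ'}·k^{1/2}. -/

import Mathlib

open MeasureTheory Finset Polynomial Set

/-- The generalized Laguerre polynomial `L_k^a(x)` with real parameter `a`. -/
noncomputable def genLaguerreR (k : ℕ) (a : ℝ) (x : ℝ) : ℝ :=
  ∑ i ∈ Finset.range (k + 1),
    (-1 : ℝ) ^ i * (Real.Gamma ((k : ℝ) + a + 1) /
      (Real.Gamma ((i : ℝ) + a + 1) * (Nat.factorial (k - i) : ℝ) * (Nat.factorial i : ℝ)))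
      * x ^ i

/-- The normalized Laguerre function `𝓛_k^a(r)`. -/
noncomputable def scriptLag (k : ℕ) (a : ℝ) (r : ℝ) : ℝ :=
  Real.sqrt (Real.Gamma ((k : ℝ) + 1) / Real.Gamma ((k : ℝ) + a + 1)) *
    Real.exp (-r / 2) * r ^ (a / 2) * genLaguerreR k a r


/-- evaluated ascending Pochhammer -/
noncomputable def pe (m : ℕ) (y : ℝ) : ℝ := (ascPochhammer ℝ m).eval y

lemma pe_zero (y : ℝ) : pe 0 y = 1 := by simp [pe]

lemma pe_one (y : ℝ) : pe 1 y = y := by simp [pe]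

lemma pe_succ (m : ℕ) (y : ℝ) : pe (m+1) y = pe m y * (y + m) :=
  ascPochhammer_succ_eval m y

lemma pe_diff (m : ℕ) (y : ℝ) : pe (m+1) (y+1) = pe (m+1) y + (m+1) * pe m (y+1) := by
  have h := congrArg (Polynomial.eval y) (ascPochhammer_succ_comp_X_add_one (S := ℝ) m)
  simpa [pe, Polynomial.eval_comp, mul_comm] using h

/-- alternating binomial sum of Pochhammer values -/
noncomputable def Ssum (k m : ℕ) (x : ℝ) : ℝ :=
  ∑ i ∈ Finset.range (k+1), (-1:ℝ)^i * (k.choose i : ℝ) * pe m (x + i)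

lemma Ssum_step (k m : ℕ) (x : ℝ) :
    Ssum (k+1) m x = Ssum k m x - Ssum k m (x+1) := by
  have h1 : ∑ i ∈ range (k+2), (-1:ℝ)^i * ((k+1).choose i : ℝ) * pe m (x + i)
      = (∑ i ∈ range (k+1), (-1:ℝ)^(i+1) * ((k+1).choose (i+1) : ℝ) * pe m (x + ((i+1 : ℕ) : ℝ)))
        + (-1:ℝ)^0 * ((k+1).choose 0 : ℝ) * pe m (x + (0:ℕ)) :=
    Finset.sum_range_succ' _ (k+1)
  have h2 : ∀ i, ((k+1).choose (i+1) : ℝ) = (k.choose i : ℝ) + (k.choose (i+1) : ℝ) := by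
    intro i; rw [Nat.choose_succ_succ]; push_cast; ring
  -- second helper: sum over shifted choose k (i+1)
  have h3 : (∑ i ∈ range (k+1), (-1:ℝ)^(i+1) * (k.choose (i+1) : ℝ) * pe m (x + ((i+1 : ℕ) : ℝ)))
      = Ssum k m x - (-1:ℝ)^0 * (k.choose 0 : ℝ) * pe m (x + (0:ℕ)) := by
    have h4 : ∑ i ∈ range (k+2), (-1:ℝ)^i * (k.choose i : ℝ) * pe m (x + i)
        = (∑ i ∈ range (k+1), (-1:ℝ)^(i+1) * (k.choose (i+1) : ℝ) * pe m (x + ((i+1 : ℕ) : ℝ)))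
          + (-1:ℝ)^0 * (k.choose 0 : ℝ) * pe m (x + (0:ℕ)) :=
      Finset.sum_range_succ' _ (k+1)
    have h5 : ∑ i ∈ range (k+2), (-1:ℝ)^i * (k.choose i : ℝ) * pe m (x + i)
        = Ssum k m x := by
      rw [Finset.sum_range_succ]
      simp [Ssum, Nat.choose_succ_self]
    rw [h5] at h4; linarith
  unfold Ssum
  rw [h1]
  have : ∀ i ∈ range (k+1), (-1:ℝ)^(i+1) * ((k+1).choose (i+1) : ℝ) * pe m (x + ((i+1 : ℕ) : ℝ))
      = (-1:ℝ)^(i+1) * (k.choose (i+1) : ℝ) * pe m (x + ((i+1 : ℕ) : ℝ))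
        + (-((-1:ℝ)^i * (k.choose i : ℝ) * pe m ((x+1) + i))) := by
    intro i _
    rw [h2 i]
    have : x + ((i:ℝ)+1) = (x+1) + i := by ring
    push_cast
    rw [this]; ring
  rw [Finset.sum_congr rfl this, Finset.sum_add_distrib, h3]
  simp [Ssum]
  ring

lemma Ssum_zero_m (k : ℕ) (x : ℝ) : Ssum (k+1) 0 x = 0 := by
  have h : ((∑ i ∈ Finset.range (k+2), (-1:ℤ)^i * ((k+1).choose i : ℤ) : ℤ) : ℝ) = 0 := by
    rw [Int.alternating_sum_range_choose_of_ne (Nat.succ_ne_zero k)]; simp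
  unfold Ssum
  push_cast at h
  simpa [pe_zero] using h

lemma Ssum_rec (k m : ℕ) (x : ℝ) :
    Ssum (k+1) (m+1) x = -((m:ℝ)+1) * Ssum k m (x+1) := by
  rw [Ssum_step]
  unfold Ssum
  rw [← Finset.sum_sub_distrib, Finset.mul_sum]
  apply Finset.sum_congr rfl
  intro i _
  have h : pe (m+1) ((x+1) + i) = pe (m+1) (x + i) + ((m:ℝ)+1) * pe m ((x+1) + i) := by
    have := pe_diff m (x + i)
    have e : (x + (i:ℝ)) + 1 = (x+1) + i := by ring
    rw [e] at this
    push_cast at this ⊢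
    linarith [this]
  rw [h]; ring

lemma Ssum_lt (m k : ℕ) (h : m < k) (x : ℝ) : Ssum k m x = 0 := by
  induction k generalizing m x with
  | zero => omega
  | succ k ih =>
    cases m with
    | zero => exact Ssum_zero_m k x
    | succ m =>
      rw [Ssum_rec]
      rw [ih m (by omega) (x+1)]
      ring

lemma Ssum_diag (k : ℕ) (x : ℝ) : Ssum k k x = (-1:ℝ)^k * (k.factorial : ℝ) := by
  induction k generalizing x with
  | zero => simp [Ssum, pe_zero]
  | succ k ih =>
    rw [Ssum_rec, ih (x+1)]
    rw [Nat.factorial_succ]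
    push_cast
    ring

lemma Ssum_diag_succ (k : ℕ) (x : ℝ) :
    Ssum k (k+1) x = (-1:ℝ)^k * ((k+1).factorial : ℝ) * (x + k) := by
  induction k generalizing x with
  | zero => simp [Ssum, pe_one]
  | succ k ih =>
    rw [Ssum_rec, ih (x+1)]
    rw [Nat.factorial_succ (k+1)]
    push_cast
    ring

open MeasureTheory Set

lemma Gamma_pe (m : ℕ) (y : ℝ) (hy : 0 < y) :
    Real.Gamma (y + m) = pe m y * Real.Gamma y := by
  induction m with
  | zero => simp [pe_zero]
  | succ m ih =>
    have h1 : y + ((m:ℝ)+1) = (y + m) + 1 := by ring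
    push_cast
    rw [h1, Real.Gamma_add_one (by positivity), ih, pe_succ]
    ring

lemma expGamma_integrable {c : ℝ} (hc : -1 < c) :
    IntegrableOn (fun x => Real.exp (-x) * x ^ c) (Set.Ioi 0) := by
  have := Real.GammaIntegral_convergent (show (0:ℝ) < c + 1 by linarith)
  simpa using this

lemma expGamma_integral {c : ℝ} (hc : -1 < c) :
    ∫ x in Set.Ioi (0:ℝ), Real.exp (-x) * x ^ c = Real.Gamma (c+1) := by
  rw [Real.Gamma_eq_integral (show (0:ℝ) < c + 1 by linarith)]
  norm_num

lemma lag_J (a : ℝ) (ha : 0 < a) (k m : ℕ) :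
    ∫ x in Set.Ioi (0:ℝ), Real.exp (-x) * x ^ (a + m) * genLaguerreR k a x
      = Real.Gamma ((k:ℝ)+a+1) / (k.factorial : ℝ) * Ssum k m (a+1) := by
  have hcong : ∀ x ∈ Set.Ioi (0:ℝ),
      Real.exp (-x) * x ^ (a + m) * genLaguerreR k a x
      = ∑ i ∈ Finset.range (k+1),
          ((-1:ℝ)^i * (Real.Gamma ((k:ℝ)+a+1) /
            (Real.Gamma ((i:ℝ)+a+1) * ((k-i).factorial : ℝ) * (i.factorial : ℝ))))
          * (Real.exp (-x) * x ^ (a + m + i)) := by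
    intro x hx
    rw [genLaguerreR, Finset.mul_sum]
    apply Finset.sum_congr rfl
    intro i _
    have hxp : x ^ (a + m + i) = x ^ (a + (m:ℝ)) * x ^ (i:ℕ) := by
      rw [← Real.rpow_natCast x i, ← Real.rpow_add (mem_Ioi.mp hx)]
    rw [hxp]; ring
  rw [setIntegral_congr_fun measurableSet_Ioi hcong]
  rw [integral_finset_sum]
  · have hterm : ∀ i ∈ Finset.range (k+1),
        (∫ x in Set.Ioi (0:ℝ),
          ((-1:ℝ)^i * (Real.Gamma ((k:ℝ)+a+1) /
            (Real.Gamma ((i:ℝ)+a+1) * ((k-i).factorial : ℝ) * (i.factorial : ℝ))))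
          * (Real.exp (-x) * x ^ (a + m + i)))
        = Real.Gamma ((k:ℝ)+a+1) / (k.factorial : ℝ)
            * ((-1:ℝ)^i * (k.choose i : ℝ) * pe m ((a+1) + i)) := by
      intro i hi
      rw [MeasureTheory.integral_const_mul, expGamma_integral (show (-1:ℝ) < a + m + i by have h1 : (0:ℝ) ≤ (m:ℝ) := Nat.cast_nonneg m; have h2 : (0:ℝ) ≤ (i:ℝ) := Nat.cast_nonneg i; linarith)]
      have hG : Real.Gamma (a + m + i + 1) = pe m (a+1+i) * Real.Gamma (a+1+i) := by
        have := Gamma_pe m (a+1+i) (by positivity)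
        rw [← this]; ring_nf
      rw [hG]
      have hchoose : ((k.choose i : ℕ) : ℝ) * ((i.factorial : ℕ) : ℝ) * (((k-i).factorial : ℕ) : ℝ)
          = (k.factorial : ℝ) := by
        rw [← Nat.cast_mul, ← Nat.cast_mul, Nat.choose_mul_factorial_mul_factorial
          (Nat.lt_succ_iff.mp (Finset.mem_range.mp hi))]
      have hGi : Real.Gamma ((i:ℝ)+a+1) = Real.Gamma (a+1+i) := by ring_nf
      have hGipos : (0:ℝ) < Real.Gamma (a+1+i) := Real.Gamma_pos_of_pos (by positivity)
      have hfac1 : (0:ℝ) < ((k-i).factorial : ℝ) := by positivity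
      have hfac2 : (0:ℝ) < ((i).factorial : ℝ) := by positivity
      have hfack : (0:ℝ) < ((k).factorial : ℝ) := by positivity
      rw [hGi]
      field_simp
      linear_combination (-pe m (a+1+i)) * hchoose
    rw [Finset.sum_congr rfl hterm, ← Finset.mul_sum]
    rfl
  · intro i _
    exact ((expGamma_integrable (show (-1:ℝ) < a + m + i by have h1 : (0:ℝ) ≤ (m:ℝ) := Nat.cast_nonneg m; have h2 : (0:ℝ) ≤ (i:ℝ) := Nat.cast_nonneg i; linarith)).const_mul _)

noncomputable def lagCoef (k : ℕ) (a : ℝ) (i : ℕ) : ℝ :=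
  (-1:ℝ)^i * (Real.Gamma ((k:ℝ)+a+1) /
    (Real.Gamma ((i:ℝ)+a+1) * ((k-i).factorial : ℝ) * (i.factorial : ℝ)))

lemma genLaguerreR_eq (k : ℕ) (a x : ℝ) :
    genLaguerreR k a x = ∑ i ∈ Finset.range (k+1), lagCoef k a i * x ^ i := rfl

lemma lag_expand {c : ℝ} (k : ℕ) (a x : ℝ) (hx : 0 < x) :
    Real.exp (-x) * x ^ c * genLaguerreR k a x
      = ∑ i ∈ Finset.range (k+1), lagCoef k a i * (Real.exp (-x) * x ^ (c + i)) := by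
  rw [genLaguerreR_eq, Finset.mul_sum]
  apply Finset.sum_congr rfl
  intro i _
  rw [show x ^ (c + (i:ℕ)) = x ^ c * x ^ (i:ℕ) by
    rw [← Real.rpow_natCast x i, ← Real.rpow_add hx]]
  ring

lemma lag_sq_expand {c : ℝ} (k : ℕ) (a x : ℝ) (hx : 0 < x) :
    Real.exp (-x) * x ^ c * (genLaguerreR k a x)^2
      = ∑ i ∈ Finset.range (k+1),
          lagCoef k a i * (Real.exp (-x) * x ^ (c + i) * genLaguerreR k a x) := by
  calc Real.exp (-x) * x ^ c * (genLaguerreR k a x)^2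
      = (Real.exp (-x) * x ^ c * genLaguerreR k a x) * genLaguerreR k a x := by ring
    _ = (∑ i ∈ Finset.range (k+1), lagCoef k a i * (Real.exp (-x) * x ^ (c + i)))
          * genLaguerreR k a x := by rw [lag_expand k a x hx]
    _ = _ := by rw [Finset.sum_mul]; apply Finset.sum_congr rfl; intro i _; ring

lemma lag_integrable (a : ℝ) (ha : 0 < a) (k : ℕ) {c : ℝ} (hc : -1 < c) :
    IntegrableOn (fun x => Real.exp (-x) * x ^ c * genLaguerreR k a x) (Set.Ioi 0) := by
  have h : IntegrableOn (fun x => ∑ i ∈ Finset.range (k+1),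
      lagCoef k a i * (Real.exp (-x) * x ^ (c + i))) (Set.Ioi 0) := by
    apply integrable_finset_sum
    intro i _
    exact (expGamma_integrable (show (-1:ℝ) < c + i by
      have h2 : (0:ℝ) ≤ (i:ℝ) := Nat.cast_nonneg i; linarith)).const_mul _
  exact h.congr_fun (fun x hx => (lag_expand k a x (mem_Ioi.mp hx)).symm) measurableSet_Ioi

lemma lag_sq_integrable (a : ℝ) (ha : 0 < a) (k : ℕ) {c : ℝ} (hc : -1 < c) :
    IntegrableOn (fun x => Real.exp (-x) * x ^ c * (genLaguerreR k a x)^2) (Set.Ioi 0) := by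
  have h : IntegrableOn (fun x => ∑ i ∈ Finset.range (k+1),
      lagCoef k a i * (Real.exp (-x) * x ^ (c + i) * genLaguerreR k a x)) (Set.Ioi 0) := by
    apply integrable_finset_sum
    intro i _
    exact (lag_integrable a ha k (show (-1:ℝ) < c + i by
      have h2 : (0:ℝ) ≤ (i:ℝ) := Nat.cast_nonneg i; linarith)).const_mul _
  exact h.congr_fun (fun x hx => (lag_sq_expand k a x (mem_Ioi.mp hx)).symm) measurableSet_Ioi

lemma lag_J' (a : ℝ) (ha : 0 < a) (k m : ℕ) :
    ∫ x in Set.Ioi (0:ℝ), Real.exp (-x) * x ^ (a + m) * genLaguerreR k a x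
      = Real.Gamma ((k:ℝ)+a+1) / (k.factorial : ℝ) * Ssum k m (a+1) :=
  lag_J a ha k m

lemma lag_sq_J (a : ℝ) (ha : 0 < a) (k m : ℕ) :
    ∫ x in Set.Ioi (0:ℝ), Real.exp (-x) * x ^ (a + m) * (genLaguerreR k a x)^2
      = ∑ j ∈ Finset.range (k+1),
        lagCoef k a j * (Real.Gamma ((k:ℝ)+a+1) / (k.factorial : ℝ) * Ssum k (m+j) (a+1)) := by
  rw [setIntegral_congr_fun measurableSet_Ioi
    (fun x hx => lag_sq_expand (c := a + m) k a x (mem_Ioi.mp hx)), integral_finset_sum]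
  · apply Finset.sum_congr rfl
    intro j _
    rw [MeasureTheory.integral_const_mul]
    have he : ∫ x in Set.Ioi (0:ℝ), Real.exp (-x) * x ^ (a + (m:ℝ) + (j:ℕ)) * genLaguerreR k a x
        = Real.Gamma ((k:ℝ)+a+1) / (k.factorial : ℝ) * Ssum k (m+j) (a+1) := by
      have := lag_J a ha k (m+j)
      rw [show a + ((m+j:ℕ):ℝ) = a + (m:ℝ) + (j:ℕ) by push_cast; ring] at this
      exact this
    rw [he]
  · intro j _
    exact (lag_integrable a ha k (show (-1:ℝ) < a + m + j by
      have h1 : (0:ℝ) ≤ (m:ℝ) := Nat.cast_nonneg m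
      have h2 : (0:ℝ) ≤ (j:ℝ) := Nat.cast_nonneg j; linarith)).const_mul _

lemma lag_N0 (a : ℝ) (ha : 0 < a) (k : ℕ) :
    ∫ x in Set.Ioi (0:ℝ), Real.exp (-x) * x ^ a * (genLaguerreR k a x)^2
      = Real.Gamma ((k:ℝ)+a+1) / (k.factorial : ℝ) := by
  have h := lag_sq_J a ha k 0
  rw [show a + ((0:ℕ):ℝ) = a by norm_num] at h
  rw [h]
  rw [Finset.sum_eq_single_of_mem k (Finset.self_mem_range_succ k)
    (fun j hj hne => by
      rw [Ssum_lt (0+j) k (by have := Finset.mem_range.mp hj; omega)]; ring)]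
  rw [show 0+k = k from by omega, Ssum_diag]
  have hG : (0:ℝ) < Real.Gamma ((k:ℝ)+a+1) := Real.Gamma_pos_of_pos (by positivity)
  have hF : (0:ℝ) < (k.factorial : ℝ) := by positivity
  simp only [lagCoef, Nat.sub_self, Nat.factorial_zero]
  field_simp
  ring_nf
  rw [show k*2 = 2*k from Nat.mul_comm k 2, pow_mul, neg_one_sq, one_pow]

lemma lag_N1 (a : ℝ) (ha : 0 < a) (k' : ℕ) :
    ∫ x in Set.Ioi (0:ℝ), Real.exp (-x) * x ^ (a+1) * (genLaguerreR (k'+1) a x)^2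
      = (2*((k':ℝ)+1) + a + 1) * Real.Gamma (((k'+1:ℕ):ℝ)+a+1) / ((k'+1).factorial : ℝ) := by
  have h := lag_sq_J a ha (k'+1) 1
  rw [show a + ((1:ℕ):ℝ) = a + 1 by norm_num] at h
  rw [h, Finset.sum_range_succ, Finset.sum_range_succ]
  rw [Finset.sum_eq_zero (fun j hj => by
    rw [Ssum_lt (1+j) (k'+1) (by have := Finset.mem_range.mp hj; omega)]; ring)]
  rw [show 1+k' = k'+1 from by omega, show 1+(k'+1) = (k'+1)+1 from by omega,
    Ssum_diag, Ssum_diag_succ]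
  have hG : (0:ℝ) < Real.Gamma ((k':ℝ)+a+1) := Real.Gamma_pos_of_pos (by positivity)
  have hF : (0:ℝ) < (k'.factorial : ℝ) := by positivity
  have hGrel : Real.Gamma ((k':ℝ)+1+a+1) = ((k':ℝ)+a+1) * Real.Gamma ((k':ℝ)+a+1) := by
    rw [show (k':ℝ)+1+a+1 = ((k':ℝ)+a+1)+1 by ring, Real.Gamma_add_one (by positivity)]
  simp only [lagCoef, Nat.sub_self, Nat.factorial_zero, Nat.add_sub_cancel_left,
    Nat.succ_sub_one, Nat.factorial_succ, Nat.factorial_one]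
  push_cast
  rw [hGrel]
  field_simp
  ring_nf
  simp only [Nat.mul_comm _ 2, pow_mul, neg_one_sq, one_pow, mul_one, one_mul]

lemma scriptLag_sq (a : ℝ) (ha : 0 < a) (k : ℕ) {r : ℝ} (hr : 0 < r) :
    |scriptLag k a r| ^ 2 * r ^ (-a + 1/2 : ℝ)
      = (k.factorial : ℝ) / Real.Gamma ((k:ℝ)+a+1)
          * (Real.exp (-r) * r ^ ((1:ℝ)/2) * (genLaguerreR k a r)^2) := by
  have hKpos : (0:ℝ) < Real.Gamma ((k:ℝ)+a+1) := Real.Gamma_pos_of_pos (by positivity)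
  rw [sq_abs, scriptLag, mul_pow, mul_pow, mul_pow]
  rw [Real.sq_sqrt (by positivity : (0:ℝ) ≤ Real.Gamma ((k:ℝ)+1) / Real.Gamma ((k:ℝ)+a+1))]
  rw [show Real.exp (-r/2) ^ 2 = Real.exp (-r) by rw [sq, ← Real.exp_add]; norm_num]
  rw [show (r ^ (a/2:ℝ)) ^ 2 = r ^ (a:ℝ) by rw [sq, ← Real.rpow_add hr]; norm_num]
  rw [Real.Gamma_nat_eq_factorial]
  have hexp : r ^ (a:ℝ) * r ^ (-a + 1/2 : ℝ) = r ^ ((1:ℝ)/2) := by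
    rw [← Real.rpow_add hr]; norm_num
  calc (k.factorial : ℝ) / Real.Gamma ((k:ℝ)+a+1) * Real.exp (-r) * r ^ (a:ℝ)
        * (genLaguerreR k a r)^2 * r ^ (-a + 1/2 : ℝ)
      = (k.factorial : ℝ) / Real.Gamma ((k:ℝ)+a+1)
          * (Real.exp (-r) * (r ^ (a:ℝ) * r ^ (-a + 1/2 : ℝ)) * (genLaguerreR k a r)^2) := by
        ring
    _ = _ := by rw [hexp]

theorem stmt9 (δ' : ℝ) (hδ' : 0 < δ') :
    ∃ C > 0, ∀ k : ℕ, 1 ≤ k → ∀ η : ℝ, 0 < η →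
      (∫ r in Set.Ioi (η / 2), |scriptLag k δ' r| ^ 2 * r ^ (-δ' + 1 / 2 : ℝ)) ≤
        C * η ^ (-δ') * (k : ℝ) ^ ((1 / 2) : ℝ) := by
  have ha : 0 < δ' := hδ'
  set a := δ' with hadef
  refine ⟨(2:ℝ) ^ a * Real.sqrt (3+a), by positivity, ?_⟩
  intro k hk η hη
  have hKpos : (0:ℝ) < Real.Gamma ((k:ℝ)+a+1) := Real.Gamma_pos_of_pos (by positivity)
  have hFpos : (0:ℝ) < (k.factorial:ℝ) := by positivity
  set Q : ℝ := (k.factorial:ℝ) / Real.Gamma ((k:ℝ)+a+1) with hQ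
  have hQpos : 0 < Q := by positivity
  have hη2 : (0:ℝ) < η/2 := by linarith
  have hkpos : (0:ℝ) < (k:ℝ) := by exact_mod_cast Nat.pos_of_ne_zero (by omega)
  set t : ℝ := Real.sqrt ((3+a)*k) with ht
  have htpos : 0 < t := Real.sqrt_pos.mpr (by positivity)
  have ht2 : t^2 = (3+a)*k := Real.sq_sqrt (by positivity)
  have hint_half : IntegrableOn
      (fun x => Real.exp (-x) * x ^ ((1:ℝ)/2) * (genLaguerreR k a x)^2) (Set.Ioi 0) :=
    lag_sq_integrable a ha k (by norm_num)
  have hint_a : IntegrableOn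
      (fun x => Real.exp (-x) * x ^ (a:ℝ) * (genLaguerreR k a x)^2) (Set.Ioi 0) :=
    lag_sq_integrable a ha k (by linarith)
  have hint_a12 : IntegrableOn
      (fun x => Real.exp (-x) * x ^ (a+1/2:ℝ) * (genLaguerreR k a x)^2) (Set.Ioi 0) :=
    lag_sq_integrable a ha k (by linarith)
  have hint_a1 : IntegrableOn
      (fun x => Real.exp (-x) * x ^ (a+1:ℝ) * (genLaguerreR k a x)^2) (Set.Ioi 0) :=
    lag_sq_integrable a ha k (by linarith)
  -- Step 1 : rewrite the integral
  have step1 : (∫ r in Set.Ioi (η/2), |scriptLag k a r| ^ 2 * r ^ (-a + 1/2 : ℝ))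
      = Q * ∫ r in Set.Ioi (η/2),
          Real.exp (-r) * r ^ ((1:ℝ)/2) * (genLaguerreR k a r)^2 := by
    rw [← MeasureTheory.integral_const_mul]
    apply setIntegral_congr_fun measurableSet_Ioi
    intro r hr
    exact scriptLag_sq a ha k (lt_trans hη2 (mem_Ioi.mp hr))
  -- Step 2 : enlarge domain & pull out (η/2)^(-a)
  have step2 : (∫ r in Set.Ioi (η/2),
        Real.exp (-r) * r ^ ((1:ℝ)/2) * (genLaguerreR k a r)^2)
      ≤ (η/2) ^ (-a) * ∫ r in Set.Ioi (0:ℝ),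
          Real.exp (-r) * r ^ (a+1/2:ℝ) * (genLaguerreR k a r)^2 := by
    have hb1 : (∫ r in Set.Ioi (η/2),
          Real.exp (-r) * r ^ ((1:ℝ)/2) * (genLaguerreR k a r)^2)
        ≤ ∫ r in Set.Ioi (η/2),
            (η/2) ^ (-a) * (Real.exp (-r) * r ^ (a+1/2:ℝ) * (genLaguerreR k a r)^2) := by
      apply setIntegral_mono_on
      · exact hint_half.mono_set (Set.Ioi_subset_Ioi hη2.le)
      · exact (hint_a12.mono_set (Set.Ioi_subset_Ioi hη2.le)).const_mul _
      · exact measurableSet_Ioi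
      · intro r hr
        have hr0 : 0 < r := lt_trans hη2 (mem_Ioi.mp hr)
        have hrr : η/2 ≤ r := (mem_Ioi.mp hr).le
        have key : r ^ ((1:ℝ)/2) ≤ (η/2) ^ (-a) * r ^ (a+1/2:ℝ) := by
          have h1 : r ^ (a+1/2:ℝ) = r ^ (a:ℝ) * r ^ ((1:ℝ)/2) := by
            rw [← Real.rpow_add hr0]
          have h2 : (η/2) ^ (a:ℝ) ≤ r ^ (a:ℝ) := Real.rpow_le_rpow hη2.le hrr ha.le
          have h3 : (0:ℝ) < (η/2) ^ (a:ℝ) := Real.rpow_pos_of_pos hη2 _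
          have h4 : (η/2) ^ (-a:ℝ) = ((η/2) ^ (a:ℝ))⁻¹ := Real.rpow_neg hη2.le a
          rw [h1, h4]
          calc r ^ ((1:ℝ)/2) = ((η/2) ^ (a:ℝ))⁻¹ * ((η/2) ^ (a:ℝ) * r ^ ((1:ℝ)/2)) := by
                field_simp
            _ ≤ ((η/2) ^ (a:ℝ))⁻¹ * (r ^ (a:ℝ) * r ^ ((1:ℝ)/2)) := by
                apply mul_le_mul_of_nonneg_left _ (by positivity)
                exact mul_le_mul_of_nonneg_right h2 (by positivity)
        have h5 : Real.exp (-r) * r ^ ((1:ℝ)/2)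
            ≤ Real.exp (-r) * ((η/2) ^ (-a) * r ^ (a+1/2:ℝ)) :=
          mul_le_mul_of_nonneg_left key (Real.exp_pos _).le
        calc Real.exp (-r) * r ^ ((1:ℝ)/2) * (genLaguerreR k a r)^2
            ≤ (Real.exp (-r) * ((η/2) ^ (-a) * r ^ (a+1/2:ℝ))) * (genLaguerreR k a r)^2 :=
              mul_le_mul_of_nonneg_right h5 (sq_nonneg _)
          _ = (η/2) ^ (-a) * (Real.exp (-r) * r ^ (a+1/2:ℝ) * (genLaguerreR k a r)^2) := by
              ring
    have hb2 : (∫ r in Set.Ioi (η/2),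
          (η/2) ^ (-a) * (Real.exp (-r) * r ^ (a+1/2:ℝ) * (genLaguerreR k a r)^2))
        ≤ (η/2) ^ (-a) * ∫ r in Set.Ioi (0:ℝ),
            Real.exp (-r) * r ^ (a+1/2:ℝ) * (genLaguerreR k a r)^2 := by
      rw [MeasureTheory.integral_const_mul]
      apply mul_le_mul_of_nonneg_left _ (by positivity)
      apply setIntegral_mono_set hint_a12
      · filter_upwards [ae_restrict_mem measurableSet_Ioi] with r hr
        have hr0 : (0:ℝ) ≤ r := (mem_Ioi.mp hr).le
        positivity
      · exact HasSubset.Subset.eventuallyLE (Set.Ioi_subset_Ioi hη2.le)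
    linarith
  -- Step 3 : AM-GM and the moment values
  have step3 : (∫ r in Set.Ioi (0:ℝ),
        Real.exp (-r) * r ^ (a+1/2:ℝ) * (genLaguerreR k a r)^2)
      ≤ (1/Q) * t := by
    obtain ⟨k', rfl⟩ : ∃ k', k = k'+1 := ⟨k-1, by omega⟩
    have hmono : (∫ r in Set.Ioi (0:ℝ),
          Real.exp (-r) * r ^ (a+1/2:ℝ) * (genLaguerreR (k'+1) a r)^2)
        ≤ ∫ r in Set.Ioi (0:ℝ),
            ((t/2) * (Real.exp (-r) * r ^ (a:ℝ) * (genLaguerreR (k'+1) a r)^2)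
            + (1/(2*t)) * (Real.exp (-r) * r ^ (a+1:ℝ) * (genLaguerreR (k'+1) a r)^2)) := by
      apply setIntegral_mono_on hint_a12
        ((hint_a.const_mul _).add (hint_a1.const_mul _)) measurableSet_Ioi
      intro r hr
      have hr0 : 0 < r := mem_Ioi.mp hr
      have h1 : r ^ (a+1/2:ℝ) = r ^ (a:ℝ) * r ^ ((1:ℝ)/2) := by
        rw [← Real.rpow_add hr0]
      have h2 : r ^ (a+1:ℝ) = r ^ (a:ℝ) * r := by
        rw [← Real.rpow_add_one hr0.ne' a]
      have hsq : r ^ ((1:ℝ)/2) = Real.sqrt r := (Real.sqrt_eq_rpow r).symm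
      have key2 : r ^ ((1:ℝ)/2) ≤ t/2 + r/(2*t) := by
        rw [hsq]
        rw [div_add_div _ _ (two_ne_zero) (by positivity : (2:ℝ)*t ≠ 0)]
        rw [le_div_iff₀ (by positivity : (0:ℝ) < 2*(2*t))]
        nlinarith [sq_nonneg (Real.sqrt r - t), Real.sq_sqrt hr0.le, htpos]
      have hnn : (0:ℝ) ≤ Real.exp (-r) * r ^ (a:ℝ) * (genLaguerreR (k'+1) a r)^2 := by
        positivity
      calc Real.exp (-r) * r ^ (a+1/2:ℝ) * (genLaguerreR (k'+1) a r)^2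
          = (Real.exp (-r) * r ^ (a:ℝ) * (genLaguerreR (k'+1) a r)^2) * r ^ ((1:ℝ)/2) := by
            rw [h1]; ring
        _ ≤ (Real.exp (-r) * r ^ (a:ℝ) * (genLaguerreR (k'+1) a r)^2) * (t/2 + r/(2*t)) :=
            mul_le_mul_of_nonneg_left key2 hnn
        _ = (t/2) * (Real.exp (-r) * r ^ (a:ℝ) * (genLaguerreR (k'+1) a r)^2)
            + (1/(2*t)) * (Real.exp (-r) * r ^ (a+1:ℝ) * (genLaguerreR (k'+1) a r)^2) := by
            rw [h2]; field_simp
    rw [MeasureTheory.integral_add (hint_a.const_mul _) (hint_a1.const_mul _),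
      MeasureTheory.integral_const_mul, MeasureTheory.integral_const_mul,
      lag_N0 a ha (k'+1), lag_N1 a ha k'] at hmono
    have hval : (t/2) * (Real.Gamma (((k'+1:ℕ):ℝ)+a+1) / (((k'+1:ℕ)).factorial : ℝ))
        + (1/(2*t)) * ((2*((k':ℝ)+1) + a + 1)
            * Real.Gamma (((k'+1:ℕ):ℝ)+a+1) / (((k'+1:ℕ)).factorial : ℝ))
        ≤ (1/Q) * t := by
      have hQinv : (1:ℝ)/Q = Real.Gamma (((k'+1:ℕ):ℝ)+a+1) / (((k'+1:ℕ)).factorial : ℝ) := by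
        rw [hQ]; rw [one_div_div]
      rw [hQinv]
      have hmom : 2*((k':ℝ)+1) + a + 1 ≤ t^2 := by
        rw [ht2]
        have : ((k'+1:ℕ):ℝ) = (k':ℝ)+1 := by push_cast; ring
        rw [this]
        nlinarith [Nat.cast_nonneg (α := ℝ) k', ha]
      have hG2 : (0:ℝ) < Real.Gamma (((k'+1:ℕ):ℝ)+a+1) / (((k'+1:ℕ)).factorial : ℝ) := by
        positivity
      set B := Real.Gamma (((k'+1:ℕ):ℝ)+a+1) / (((k'+1:ℕ)).factorial : ℝ)
      calc (t/2) * B + (1/(2*t))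
            * ((2*((k':ℝ)+1) + a + 1) * Real.Gamma (((k'+1:ℕ):ℝ)+a+1) / (((k'+1:ℕ)).factorial : ℝ))
          = (t/2) * B + (1/(2*t)) * ((2*((k':ℝ)+1) + a + 1) * B) := by
            rw [mul_div_assoc]
        _ ≤ (t/2) * B + (1/(2*t)) * (t^2 * B) := by
            gcongr
        _ = B * t := by field_simp; ring
    linarith
  -- combine everything
  have hsplit : (η/2) ^ (-a) = (2:ℝ)^a * η^(-a) := by
    rw [Real.div_rpow hη.le (by norm_num : (0:ℝ) ≤ 2),
      Real.rpow_neg (by norm_num : (0:ℝ) ≤ 2)]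
    field_simp
  have htval : t = Real.sqrt (3+a) * (k:ℝ)^((1:ℝ)/2) := by
    rw [ht, Real.sqrt_mul (by positivity : (0:ℝ) ≤ 3+a), Real.sqrt_eq_rpow, Real.sqrt_eq_rpow]
  rw [step1]
  have hJ : (∫ r in Set.Ioi (η/2),
        Real.exp (-r) * r ^ ((1:ℝ)/2) * (genLaguerreR k a r)^2)
      ≤ (η/2) ^ (-a) * ((1/Q) * t) :=
    le_trans step2 (mul_le_mul_of_nonneg_left step3 (by positivity))
  calc Q * (∫ r in Set.Ioi (η/2),
        Real.exp (-r) * r ^ ((1:ℝ)/2) * (genLaguerreR k a r)^2)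
      ≤ Q * ((η/2) ^ (-a) * ((1/Q) * t)) := mul_le_mul_of_nonneg_left hJ hQpos.le
    _ = (η/2) ^ (-a) * t := by field_simp
    _ = (2:ℝ)^a * Real.sqrt (3+a) * η^(-a) * (k:ℝ)^((1:ℝ)/2) := by
        rw [hsplit, htval]; ring
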